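/- For a k-homogeneous language L₁, a 0-homogeneous language L₂, b ∈ Σ₀ and any symbol α: α⁻¹(L₁ ·_b L₂) = (b⁻¹(L₁) ·_b L₂) ∘₁ b⁻¹(L₂) if α = b; α⁻¹(L₁) ·_b L₂ ∪ (b⁻¹(L₁) ·_b L₂) ∘₁ α⁻¹(L₂) if α ∈ Σ₀∖{b}; and α⁻¹(L₁) ·_b L₂ otherwise. -/

import Mathlib

inductive GTree (S : Type) (ar : S → ℕ) : Type where
  | eps (x : ℕ) : GTree S ar
  | node (f : S) (ts : Fin (ar f) → GTree S ar) : GTree S ar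

namespace GTree

variable {S : Type} {ar : S → ℕ}

/-- Substitute each ε-symbol `ε_x` by `σ x`. -/
def subst (σ : ℕ → GTree S ar) : GTree S ar → GTree S ar
  | eps x => σ x
  | node f ts => node f (fun i => subst σ (ts i))

/-- The multiset of ε-indices of a tree. -/
def epsIdx : GTree S ar → Multiset ℕ
  | eps x => {x}
  | node _ ts => ∑ i, epsIdx (ts i)

/-- `Inc_ε(z,t)`: increment every ε-index by `z`. -/
def inc (z : ℕ) (t : GTree S ar) : GTree S ar :=
  subst (fun x => eps (x + z)) t

/-- Composition `t ∘ (t₁,…,t_k)`: graft `ts_j` at the `j`-th smallest ε-index of `t`. -/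
def compo (t : GTree S ar) (ts : List (GTree S ar)) : GTree S ar :=
  subst (fun x => ts.getD ((Multiset.sort (epsIdx t) (· ≤ ·)).idxOf x) (eps x)) t

/-- The tree `α(ε₁,…,ε_k)` associated with a symbol `α`. -/
def symTree (f : S) : GTree S ar := node f (fun i => eps (i.1 + 1))

/-- Bottom-up quotient `d⁻¹(t)` of a tree `t` w.r.t. a tree `d`. -/
def quotT (d t : GTree S ar) : Set (GTree S ar) :=
  { u | epsIdx u = 1 ::ₘ (epsIdx t - epsIdx d).map (· + 1) ∧
        subst (fun j => if j = 1 then d else eps (j - 1)) u = t }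

/-- Bottom-up quotient `d⁻¹(L)` of a language w.r.t. a tree. -/
def quotL (d : GTree S ar) (L : Set (GTree S ar)) : Set (GTree S ar) :=
  ⋃ t ∈ L, quotT d t

def incL (z : ℕ) (L : Set (GTree S ar)) : Set (GTree S ar) := inc z '' L

/-- Composition of languages `L ∘ (L₁,…,L_k)`. -/
def compoL (L : Set (GTree S ar)) (Ls : List (Set (GTree S ar))) : Set (GTree S ar) :=
  { u | ∃ t ∈ L, ∃ ts : List (GTree S ar), List.Forall₂ (· ∈ ·) ts Ls ∧ u = compo t ts }

/-- Partial composition `t ∘₁ L'` at the first (smallest) ε-index. -/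
def pcomp (t : GTree S ar) (L' : Set (GTree S ar)) : Set (GTree S ar) :=
  { u | ∃ t' ∈ L', u = compo t (t' :: ((Multiset.sort (epsIdx t) (· ≤ ·)).tail).map eps) }

/-- Partial composition of languages `L ∘₁ L'`. -/
def pcompL (L L' : Set (GTree S ar)) : Set (GTree S ar) := ⋃ t ∈ L, pcomp t L'

/-- Tree substitution `t_{b ← L}` of the 0-ary symbol `b` by the language `L`. -/
def bsub [DecidableEq S] (b : S) (L : Set (GTree S ar)) : GTree S ar → Set (GTree S ar)
  | eps x => {eps x}
  | node f ts =>
      if f = b then L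
      else { u | ∃ us : Fin (ar f) → GTree S ar, (∀ i, us i ∈ bsub b L (ts i)) ∧ u = node f us }

/-- `b`-product `L₁ ·_b L₂`. -/
def prodB [DecidableEq S] (L₁ : Set (GTree S ar)) (b : S) (L₂ : Set (GTree S ar)) :
    Set (GTree S ar) :=
  ⋃ t ∈ L₁, bsub b L₂ t

/-- Iterated `b`-product `L^{n_b}`. -/
def iterB [DecidableEq S] (b : S) (L : Set (GTree S ar)) : ℕ → Set (GTree S ar)
  | 0 => {symTree b}
  | n + 1 => iterB b L n ∪ prodB L b (iterB b L n)

/-- `b`-closure `L^{*_b}`. -/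
def closB [DecidableEq S] (b : S) (L : Set (GTree S ar)) : Set (GTree S ar) :=
  ⋃ n, iterB b L n

/-- Iterated composition `L^{n∘}` of a 1-homogeneous language of ε-index `{x}`. -/
def iterC (x : ℕ) (L : Set (GTree S ar)) : ℕ → Set (GTree S ar)
  | 0 => {eps x}
  | n + 1 => iterC x L n ∪ pcompL (iterC x L n) L

/-- Composition closure `L^⊛`. -/
def closC (x : ℕ) (L : Set (GTree S ar)) : Set (GTree S ar) := ⋃ n, iterC x L n

end GTree

namespace GTree
variable {S : Type} {ar : S → ℕ}

/-- The substitution used in quotients by `symTree f`. -/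
def sigf (f : S) : ℕ → GTree S ar := fun j => if j = 1 then symTree f else eps (j - 1)

/-- The substitution plugging `t'` at index 1. -/
def tau (t' : GTree S ar) : ℕ → GTree S ar := fun x => if x = 1 then t' else eps x

def Good (t : GTree S ar) : Prop := (epsIdx t).count 1 = 1 ∧ (epsIdx t).count 0 = 0

theorem epsIdx_subst (σ : ℕ → GTree S ar) (t : GTree S ar) :
    epsIdx (subst σ t) = (epsIdx t).bind (fun j => epsIdx (σ j)) := by
  induction t with
  | eps x => simp [subst, epsIdx]
  | node f ts ih =>
      simp only [subst, epsIdx]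
      rw [Finset.sum_congr rfl (fun i _ => ih i)]
      induction (Finset.univ : Finset (Fin (ar f))) using Finset.induction with
      | empty => simp
      | insert _ _ h ih2 => simp [Finset.sum_insert h, Multiset.add_bind, ih2]

theorem subst_subst (σ σ' : ℕ → GTree S ar) (t : GTree S ar) :
    subst σ (subst σ' t) = subst (fun x => subst σ (σ' x)) t := by
  induction t with
  | eps x => rfl
  | node f ts ih => simp [subst, ih]

theorem subst_congr {σ σ' : ℕ → GTree S ar} {t : GTree S ar}
    (h : ∀ j ∈ epsIdx t, σ j = σ' j) : subst σ t = subst σ' t := by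
  induction t with
  | eps x => exact h x (by simp [epsIdx])
  | node f ts ih =>
      simp only [subst, node.injEq, heq_eq_eq, true_and]
      funext i
      exact ih i (fun j hj => h j (by simp [epsIdx]; exact ⟨i, hj⟩))

theorem subst_id {σ : ℕ → GTree S ar} {t : GTree S ar}
    (h : ∀ j ∈ epsIdx t, σ j = eps j) : subst σ t = t := by
  induction t with
  | eps x => exact h x (by simp [epsIdx])
  | node f ts ih =>
      simp only [subst, node.injEq, heq_eq_eq, true_and]
      funext i
      exact ih i (fun j hj => h j (by simp [epsIdx]; exact ⟨i, hj⟩))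

theorem count_epsIdx_node (k : ℕ) (f : S) (ts : Fin (ar f) → GTree S ar) :
    (epsIdx (node f ts)).count k = ∑ i, (epsIdx (ts i)).count k := by
  simp [epsIdx, Multiset.count_sum']

theorem node_congr_fin0 {f g : S} (h : f = g) (hf : ar f = 0)
    (ts : Fin (ar f) → GTree S ar) (ts' : Fin (ar g) → GTree S ar) :
    node f ts = node g ts' := by
  subst h
  have : ts = ts' := funext fun i => absurd i.isLt (by omega)
  rw [this]

theorem sum_nat_eq_one {n : ℕ} {f : Fin n → ℕ} (h : ∑ i, f i = 1) :
    ∃ i₀, f i₀ = 1 ∧ ∀ j, j ≠ i₀ → f j = 0 := by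
  have h1 : ∃ i₀, f i₀ ≠ 0 := by
    by_contra hc
    push_neg at hc
    simp [hc] at h
  obtain ⟨i₀, hi₀⟩ := h1
  have hle : f i₀ ≤ 1 := h ▸ Finset.single_le_sum (fun j _ => Nat.zero_le _) (Finset.mem_univ i₀)
  have hf1 : f i₀ = 1 := le_antisymm hle (Nat.one_le_iff_ne_zero.2 hi₀)
  refine ⟨i₀, hf1, fun j hj => ?_⟩
  by_contra hc
  have : 2 ≤ ∑ i, f i := by
    calc 2 = f i₀ + 1 := by omega
    _ ≤ f i₀ + f j := by omega
    _ = ∑ i ∈ {i₀, j}, f i := by rw [Finset.sum_pair (Ne.symm hj)]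
    _ ≤ ∑ i, f i := Finset.sum_le_sum_of_subset (Finset.subset_univ _)
  omega

variable [DecidableEq S]

theorem bsub_eps (b : S) (L : Set (GTree S ar)) (x : ℕ) :
    bsub b L (eps x) = {eps x} := rfl

theorem bsub_node_self (L : Set (GTree S ar)) (b : S) (ts : Fin (ar b) → GTree S ar) :
    bsub b L (node b ts) = L := by simp [bsub]

theorem bsub_node_ne {b f : S} (hf : f ≠ b) (L : Set (GTree S ar))
    (ts : Fin (ar f) → GTree S ar) :
    bsub b L (node f ts) =
      { u | ∃ us : Fin (ar f) → GTree S ar, (∀ i, us i ∈ bsub b L (ts i)) ∧ u = node f us } := by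
  simp [bsub, hf]

theorem epsIdx_bsub {b : S} (hb : ar b = 0) {L : Set (GTree S ar)}
    (hL : ∀ w ∈ L, epsIdx w = 0)
    {t s : GTree S ar} (hs : s ∈ bsub b L t) : epsIdx s = epsIdx t := by
  induction t generalizing s with
  | eps x => rw [bsub_eps] at hs; simp_all
  | node f ts ih =>
      by_cases hf : f = b
      · subst hf
        rw [bsub_node_self] at hs
        rw [hL s hs, epsIdx]
        symm
        apply Finset.sum_eq_zero
        intro i _
        exact absurd i.isLt (by omega)
      · rw [bsub_node_ne hf] at hs
        obtain ⟨us, hus, rfl⟩ := hs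
        simp only [epsIdx]
        exact Finset.sum_congr rfl fun i _ => ih i (hus i)

theorem bsub_subst {b : S} {L : Set (GTree S ar)} (hL : ∀ w ∈ L, epsIdx w = 0)
    {σ ρ : ℕ → GTree S ar}
    (hσ : ∀ j, ρ j ∈ bsub b L (σ j)) {t s : GTree S ar} (hs : s ∈ bsub b L t) :
    subst ρ s ∈ bsub b L (subst σ t) := by
  induction t generalizing s with
  | eps x => rw [bsub_eps] at hs; simp only [Set.mem_singleton_iff] at hs; subst hs; exact hσ x
  | node f ts ih =>
      by_cases hf : f = b
      · subst hf
        rw [bsub_node_self] at hs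
        show subst ρ s ∈ bsub f L (node f fun i => subst σ (ts i))
        rw [bsub_node_self]
        have : subst ρ s = s := subst_id (fun j hj => by simp [hL s hs] at hj)
        rwa [this]
      · rw [bsub_node_ne hf] at hs
        obtain ⟨us, hus, rfl⟩ := hs
        rw [subst, subst, bsub_node_ne hf]
        exact ⟨fun i => subst ρ (us i), fun i => ih i (hus i), rfl⟩

theorem count_epsIdx_symTree_zero (f : S) : (epsIdx (symTree f : GTree S ar)).count 0 = 0 := by
  simp [symTree, epsIdx, Multiset.count_sum']

theorem card_epsIdx_symTree (f : S) :
    Multiset.card (epsIdx (symTree f : GTree S ar)) = ar f := by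
  simp [symTree, epsIdx]

theorem epsIdx_subst_sigf {f : S} {u : GTree S ar}
    (h1 : (epsIdx u).count 1 = 1) (h0 : (epsIdx u).count 0 = 0) :
    epsIdx (subst (sigf f) u) =
      epsIdx (symTree f : GTree S ar) + ((epsIdx u).erase 1).map (· - 1) := by
  have h1m : (1:ℕ) ∈ epsIdx u := Multiset.count_pos.1 (by omega)
  have hA : epsIdx u = 1 ::ₘ (epsIdx u).erase 1 := (Multiset.cons_erase h1m).symm
  have hM1 : ((epsIdx u).erase 1).count 1 = 0 := by
    have := Multiset.count_erase_self 1 (epsIdx u); omega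
  have hM0 : ((epsIdx u).erase 1).count 0 = 0 := by
    have h := Multiset.count_erase_of_ne (by norm_num : (0:ℕ) ≠ 1) (epsIdx u)
    omega
  rw [epsIdx_subst]
  conv_lhs => rw [hA]
  rw [Multiset.cons_bind]
  have : sigf f 1 = (symTree f : GTree S ar) := by simp [sigf]
  rw [this]
  congr 1
  rw [show ((epsIdx u).erase 1).map (· - 1)
        = ((epsIdx u).erase 1).bind (fun j => {j - 1}) from (Multiset.bind_singleton _ _).symm]
  apply Multiset.bind_congr
  intro j hj
  have hj1 : j ≠ 1 := fun h => by rw [h] at hj; exact absurd (Multiset.count_pos.2 hj) (by omega)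
  simp [sigf, hj1, epsIdx]

theorem quotT_symTree (f : S) (s : GTree S ar) :
    quotT (symTree f) s = {u | Good u ∧ subst (sigf f) u = s} := by
  ext u
  show (epsIdx u = 1 ::ₘ (epsIdx s - epsIdx (symTree f)).map (· + 1) ∧
      subst (fun j => if j = 1 then symTree f else eps (j - 1)) u = s) ↔ _
  have hσ : (fun j => if j = 1 then (symTree f : GTree S ar) else eps (j - 1)) = sigf f := rfl
  rw [hσ]
  constructor
  · rintro ⟨hA, hsub⟩
    have h0 : (epsIdx u).count 0 = 0 := by
      rw [hA]
      rw [Multiset.count_cons_of_ne (by norm_num)]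
      rw [Multiset.count_eq_zero]
      simp
    have hs0 : (epsIdx s).count 0 = 0 := by
      rw [← hsub, epsIdx_subst, Multiset.count_bind, Multiset.sum_eq_zero]
      intro x hx
      obtain ⟨j, hj, rfl⟩ := Multiset.mem_map.1 hx
      have hj0 : j ≠ 0 := fun h => by
        rw [h] at hj; exact absurd (Multiset.count_pos.2 hj) (by omega)
      by_cases hj1 : j = 1
      · simp [sigf, hj1, count_epsIdx_symTree_zero]
      · simp [sigf, hj1, epsIdx]
        omega
    have h1 : (epsIdx u).count 1 = 1 := by
      rw [hA]
      rw [Multiset.count_cons_self]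
      have : ((epsIdx s - epsIdx (symTree f : GTree S ar)).map (· + 1)).count 1 = 0 := by
        rw [Multiset.count_eq_zero]
        intro hmem
        obtain ⟨j, hj, hj1⟩ := Multiset.mem_map.1 hmem
        have : j = 0 := by omega
        subst this
        have := Multiset.count_sub 0 (epsIdx s) (epsIdx (symTree f : GTree S ar))
        exact absurd (Multiset.count_pos.2 hj) (by omega)
      omega
    exact ⟨⟨h1, h0⟩, hsub⟩
  · rintro ⟨⟨h1, h0⟩, hsub⟩
    refine ⟨?_, hsub⟩
    have key := epsIdx_subst_sigf (f := f) h1 h0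
    rw [hsub] at key
    have h1m : (1:ℕ) ∈ epsIdx u := Multiset.count_pos.1 (by omega)
    rw [key, add_tsub_cancel_left, Multiset.map_map]
    have : ((epsIdx u).erase 1).map ((· + 1) ∘ (· - 1)) = (epsIdx u).erase 1 := by
      rw [show (epsIdx u).erase 1 = Multiset.map id ((epsIdx u).erase 1) by simp]
      rw [Multiset.map_map]
      apply Multiset.map_congr rfl
      intro j hj
      have hj0 : j ≠ 0 := fun h => by
        subst h
        have h' := Multiset.count_erase_of_ne (by norm_num : (0:ℕ) ≠ 1) (epsIdx u)
        exact absurd (Multiset.count_pos.2 hj) (by omega)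
      simp
      omega
    rw [this, Multiset.cons_erase h1m]

theorem node_inj {f : S} {ts ts' : Fin (ar f) → GTree S ar} (h : node f ts = node f ts') :
    ts = ts' := by
  have h2 := (GTree.node.injEq _ _ _ _).mp h
  exact eq_of_heq h2.2

theorem epsIdx_subst_tau {t' w : GTree S ar} (h1 : (epsIdx w).count 1 = 1) :
    epsIdx (subst (tau t') w) = epsIdx t' + (epsIdx w).erase 1 := by
  have h1m : (1:ℕ) ∈ epsIdx w := Multiset.count_pos.1 (by omega)
  have hA : epsIdx w = 1 ::ₘ (epsIdx w).erase 1 := (Multiset.cons_erase h1m).symm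
  rw [epsIdx_subst]
  conv_lhs => rw [hA]
  rw [Multiset.cons_bind]
  have ht : tau t' 1 = t' := by simp [tau]
  rw [ht]
  congr 1
  have hcongr : ((epsIdx w).erase 1).bind (fun j => epsIdx (tau t' j))
      = ((epsIdx w).erase 1).bind (fun j => {j}) := by
    apply Multiset.bind_congr
    intro j hj
    have hj1 : j ≠ 1 := fun h => by
      rw [h] at hj
      have := Multiset.count_erase_self 1 (epsIdx w)
      exact absurd (Multiset.count_pos.2 hj) (by omega)
    simp [tau, hj1, epsIdx]
  rw [hcongr, Multiset.bind_singleton, Multiset.map_id']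

theorem eps_mem_bsub {b : S} {L : Set (GTree S ar)} (hL : ∀ w ∈ L, epsIdx w = 0)
    {t : GTree S ar} {x : ℕ} (h : eps x ∈ bsub b L t) : t = eps x := by
  cases t with
  | eps y => rw [bsub_eps] at h; simp at h; rw [h]
  | node f ts =>
      by_cases hf : f = b
      · subst hf
        rw [bsub_node_self] at h
        have := hL _ h
        simp [epsIdx] at this
      · rw [bsub_node_ne hf] at h
        obtain ⟨us, _, h⟩ := h
        exact absurd h (by simp)

theorem sigf_mem_bsub {b f : S} (hfb : f ≠ b) (L : Set (GTree S ar)) (j : ℕ) :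
    sigf f j ∈ bsub b L (sigf f j) := by
  by_cases hj : j = 1
  · simp only [sigf, hj, if_pos]
    rw [symTree, bsub_node_ne hfb]
    exact ⟨fun i => eps (i.1 + 1), fun i => by rw [bsub_eps]; rfl, rfl⟩
  · simp only [sigf, hj, if_neg, ite_false]
    rw [bsub_eps]; rfl

/-- The `c = 0` core lemma. -/
theorem lemZ {b : S} (hb : ar b = 0) {L₂ : Set (GTree S ar)}
    (hL₂ : ∀ w ∈ L₂, epsIdx w = 0) (f : S) :
    ∀ t s u : GTree S ar, s ∈ bsub b L₂ t → subst (sigf f) u = s →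
      (epsIdx u).count 1 = 0 → ∃ v, subst (sigf f) v = t ∧ u ∈ bsub b L₂ v := by
  intro t
  induction t with
  | eps x =>
      intro s u hs hsub hc
      rw [bsub_eps] at hs
      simp only [Set.mem_singleton_iff] at hs
      subst hs
      cases u with
      | eps y => exact ⟨eps y, hsub, Set.mem_singleton _⟩
      | node g us => simp [subst] at hsub
  | node g ts ih =>
      intro s u hs hsub hc
      by_cases hg : g = b
      · subst hg
        rw [bsub_node_self] at hs
        have hu0 : epsIdx u = 0 := by
          by_contra h0
          obtain ⟨j, hj⟩ := Multiset.exists_mem_of_ne_zero h0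
          have hj1 : j ≠ 1 := fun h => by
            rw [h] at hj; exact absurd (Multiset.count_pos.2 hj) (by omega)
          have : j - 1 ∈ epsIdx s := by
            rw [← hsub, epsIdx_subst, Multiset.mem_bind]
            exact ⟨j, hj, by simp [sigf, hj1, epsIdx]⟩
          rw [hL₂ s hs] at this
          simp at this
        have hu : u = s := by
          rw [← hsub]
          exact (subst_id (fun j hj => by rw [hu0] at hj; simp at hj)).symm
        refine ⟨node g ts, ?_, ?_⟩
        · show node g (fun i => subst (sigf f) (ts i)) = node g ts
          exact node_congr_fin0 rfl hb _ _
        · rw [bsub_node_self]; rw [hu]; exact hs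
      · rw [bsub_node_ne hg] at hs
        obtain ⟨ss, hss, rfl⟩ := hs
        cases u with
        | eps y =>
            have hy1 : y ≠ 1 := fun h => by
              subst h; simp [epsIdx] at hc
            simp [subst, sigf, hy1] at hsub
        | node g' us =>
            have hsub' : node g' (fun i => subst (sigf f) (us i)) = node g ss := hsub
            injection hsub' with h1 h2
            subst h1
            have h2' := eq_of_heq h2
            have hcs : ∀ i, (epsIdx (us i)).count 1 = 0 := by
              intro i
              have := count_epsIdx_node 1 g' us
              rw [hc] at this
              have h0 := Finset.sum_eq_zero_iff.1 this.symm
              exact h0 i (Finset.mem_univ i)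
            have hIH : ∀ i, ∃ v, subst (sigf f) v = ts i ∧ us i ∈ bsub b L₂ v := by
              intro i
              exact ih i (ss i) (us i) (hss i) (congrFun h2' i) (hcs i)
            choose vs hvs1 hvs2 using hIH
            refine ⟨node g' vs, ?_, ?_⟩
            · show node g' (fun i => subst (sigf f) (vs i)) = node g' ts
              congr 1
              exact funext hvs1
            · rw [bsub_node_ne hg]
              exact ⟨us, hvs2, rfl⟩

theorem eps_idx_one {y : ℕ} (h : (epsIdx (eps y : GTree S ar)).count 1 = 1) : y = 1 := by
  have h1 : (1:ℕ) ∈ ({y} : Multiset ℕ) := by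
    apply Multiset.count_pos.1
    simp [epsIdx] at h
    omega
  have := Multiset.mem_singleton.1 h1
  omega

theorem good_eps_one : Good (eps 1 : GTree S ar) := by
  constructor <;> simp [epsIdx]

theorem epsIdx_symTree_eq_zero {f : S} (hf : ar f = 0) :
    epsIdx (symTree f : GTree S ar) = 0 := by
  rw [← Multiset.card_eq_zero, card_epsIdx_symTree, hf]

theorem good_node_split {g : S} {us : Fin (ar g) → GTree S ar}
    (h1 : (epsIdx (node g us)).count 1 = 1) (h0 : (epsIdx (node g us)).count 0 = 0) :
    ∃ i₀, (epsIdx (us i₀)).count 1 = 1 ∧ (∀ j, j ≠ i₀ → (epsIdx (us j)).count 1 = 0) ∧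
      ∀ i, (epsIdx (us i)).count 0 = 0 := by
  rw [count_epsIdx_node] at h1 h0
  obtain ⟨i₀, hi₀, hrest⟩ := sum_nat_eq_one h1
  refine ⟨i₀, hi₀, hrest, fun i => ?_⟩
  exact Finset.sum_eq_zero_iff.1 h0 i (Finset.mem_univ i)

theorem good_node_assemble {g : S} {vs : Fin (ar g) → GTree S ar} (i₀ : Fin (ar g))
    (h1 : Good (vs i₀))
    (h2 : ∀ i, i ≠ i₀ → (epsIdx (vs i)).count 1 = 0 ∧ (epsIdx (vs i)).count 0 = 0) :
    Good (node g vs) := by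
  constructor
  · rw [count_epsIdx_node]
    rw [Finset.sum_eq_single i₀ (fun j _ hj => (h2 j hj).1) (fun h => absurd (Finset.mem_univ i₀) h)]
    exact h1.1
  · rw [count_epsIdx_node]
    apply Finset.sum_eq_zero
    intro i _
    by_cases hi : i = i₀
    · subst hi; exact h1.2
    · exact (h2 i hi).2

/-- Core lemma for the case `ar f ≥ 1`. -/
theorem lemCase3 {b f : S} (hb : ar b = 0) (hf : 1 ≤ ar f) {L₂ : Set (GTree S ar)}
    (hL₂ : ∀ w ∈ L₂, epsIdx w = 0) :
    ∀ t s u : GTree S ar, s ∈ bsub b L₂ t → subst (sigf f) u = s →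
      ∃ v, subst (sigf f) v = t ∧ u ∈ bsub b L₂ v := by
  intro t
  induction t with
  | eps x =>
      intro s u hs hsub
      rw [bsub_eps] at hs
      simp only [Set.mem_singleton_iff] at hs
      subst hs
      cases u with
      | eps y => exact ⟨eps y, hsub, Set.mem_singleton _⟩
      | node g us => simp [subst] at hsub
  | node g ts ih =>
      intro s u hs hsub
      by_cases hg : g = b
      · subst hg
        rw [bsub_node_self] at hs
        have hu0 : epsIdx u = 0 := by
          by_contra h0
          obtain ⟨j, hj⟩ := Multiset.exists_mem_of_ne_zero h0
          have hne : epsIdx (sigf f j : GTree S ar) ≠ 0 := by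
            by_cases hj1 : j = 1
            · subst hj1
              simp only [sigf, if_pos]
              rw [← Multiset.card_pos, card_epsIdx_symTree]
              omega
            · simp [sigf, hj1, epsIdx]
          obtain ⟨x, hx⟩ := Multiset.exists_mem_of_ne_zero hne
          have : x ∈ epsIdx s := by
            rw [← hsub, epsIdx_subst, Multiset.mem_bind]
            exact ⟨j, hj, hx⟩
          rw [hL₂ s hs] at this
          simp at this
        have hu : u = s := by
          rw [← hsub]
          exact (subst_id (fun j hj => by rw [hu0] at hj; simp at hj)).symm
        refine ⟨node g ts, node_congr_fin0 rfl hb _ _, ?_⟩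
        rw [bsub_node_self]; rw [hu]; exact hs
      · rw [bsub_node_ne hg] at hs
        obtain ⟨ss, hss, rfl⟩ := hs
        cases u with
        | eps y =>
            by_cases hy1 : y = 1
            · subst hy1
              have hsym : (symTree f : GTree S ar) = node g ss := by
                simpa [subst, sigf] using hsub
              rw [symTree] at hsym
              injection hsym with h1 h2
              subst h1
              have h2' := eq_of_heq h2
              have hts : ∀ i, ts i = eps (i.1 + 1) := by
                intro i
                apply eps_mem_bsub hL₂
                have := hss i
                rw [← congrFun h2' i] at this
                exact this
              refine ⟨eps 1, ?_, Set.mem_singleton _⟩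
              show (symTree f : GTree S ar) = node f ts
              rw [symTree]
              congr 1
              exact funext fun i => (hts i).symm
            · simp [subst, sigf, hy1] at hsub
        | node g' us =>
            have hsub' : node g' (fun i => subst (sigf f) (us i)) = node g ss := hsub
            injection hsub' with h1 h2
            subst h1
            have h2' := eq_of_heq h2
            have hIH : ∀ i, ∃ v, subst (sigf f) v = ts i ∧ us i ∈ bsub b L₂ v :=
              fun i => ih i (ss i) (us i) (hss i) (congrFun h2' i)
            choose vs hvs1 hvs2 using hIH
            refine ⟨node g' vs, ?_, ?_⟩
            · show node g' (fun i => subst (sigf f) (vs i)) = node g' ts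
              congr 1
              exact funext hvs1
            · rw [bsub_node_ne hg]
              exact ⟨us, hvs2, rfl⟩

/-- Core lemma for the case `α = b`. -/
theorem lemCase1 {b : S} (hb : ar b = 0) {L₂ : Set (GTree S ar)}
    (hL₂ : ∀ w ∈ L₂, epsIdx w = 0) :
    ∀ t s u : GTree S ar, s ∈ bsub b L₂ t → subst (sigf b) u = s →
      (epsIdx u).count 1 = 1 → (epsIdx u).count 0 = 0 →
      ∃ v w t', Good v ∧ subst (sigf b) v = t ∧ w ∈ bsub b L₂ v ∧ Good t' ∧
        subst (sigf b) t' ∈ L₂ ∧ u = subst (tau t') w := by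
  intro t
  induction t with
  | eps x =>
      intro s u hs hsub hc1 hc0
      rw [bsub_eps] at hs
      simp only [Set.mem_singleton_iff] at hs
      subst hs
      cases u with
      | eps y =>
          have hy := eps_idx_one hc1
          subst hy
          simp [subst, sigf, symTree] at hsub
      | node g us => simp [subst] at hsub
  | node g ts ih =>
      intro s u hs hsub hc1 hc0
      by_cases hg : g = b
      · subst hg
        rw [bsub_node_self] at hs
        refine ⟨eps 1, eps 1, u, good_eps_one, ?_, Set.mem_singleton _, ⟨hc1, hc0⟩, ?_, ?_⟩
        · show (symTree g : GTree S ar) = node g ts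
          rw [symTree]
          exact node_congr_fin0 rfl hb _ _
        · rw [hsub]; exact hs
        · simp [subst, tau]
      · rw [bsub_node_ne hg] at hs
        obtain ⟨ss, hss, rfl⟩ := hs
        cases u with
        | eps y =>
            have hy := eps_idx_one hc1
            subst hy
            have : (symTree b : GTree S ar) = node g ss := by simpa [subst, sigf] using hsub
            rw [symTree] at this
            injection this with h1 h2
            exact absurd h1.symm hg
        | node g' us =>
            have hsub' : node g' (fun i => subst (sigf b) (us i)) = node g ss := hsub
            injection hsub' with h1 h2
            subst h1
            have h2' := eq_of_heq h2
            obtain ⟨i₀, hi₀1, hiZ, hi0⟩ := good_node_split hc1 hc0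
            obtain ⟨v₀, w₀, t', hGv₀, hv₀, hw₀, hGt', ht'L, hut'⟩ :=
              ih i₀ (ss i₀) (us i₀) (hss i₀) (congrFun h2' i₀) hi₀1 (hi0 i₀)
            have hZ : ∀ i, ∃ v, i ≠ i₀ → subst (sigf b) v = ts i ∧ us i ∈ bsub b L₂ v := by
              intro i
              by_cases hi : i = i₀
              · exact ⟨eps 0, fun h => absurd hi h⟩
              · obtain ⟨v, h1, h2⟩ :=
                  lemZ hb hL₂ b (ts i) (ss i) (us i) (hss i) (congrFun h2' i) (hiZ i hi)
                exact ⟨v, fun _ => ⟨h1, h2⟩⟩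
            choose vZ hvZ using hZ
            set vs : Fin (ar g') → GTree S ar := fun i => if i = i₀ then v₀ else vZ i with hvs
            set ws : Fin (ar g') → GTree S ar := fun i => if i = i₀ then w₀ else us i with hws
            have hepsZ : ∀ i, i ≠ i₀ → epsIdx (vZ i) = epsIdx (us i) :=
              fun i hi => (epsIdx_bsub hb hL₂ ((hvZ i hi).2)).symm
            refine ⟨node g' vs, node g' ws, t', ?_, ?_, ?_, hGt', ht'L, ?_⟩
            · apply good_node_assemble i₀
              · simp only [hvs, if_pos rfl]; exact hGv₀
              · intro i hi
                simp only [hvs, if_neg hi]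
                rw [hepsZ i hi]
                exact ⟨hiZ i hi, hi0 i⟩
            · show node g' (fun i => subst (sigf b) (vs i)) = node g' ts
              congr 1
              funext i
              by_cases hi : i = i₀
              · subst hi; simp only [hvs, if_pos rfl]; exact hv₀
              · simp only [hvs, if_neg hi]; exact (hvZ i hi).1
            · rw [bsub_node_ne hg]
              refine ⟨ws, fun i => ?_, rfl⟩
              by_cases hi : i = i₀
              · subst hi; simp only [hvs, hws, if_pos rfl]; exact hw₀
              · simp only [hvs, hws, if_neg hi]; exact (hvZ i hi).2
            · show node g' us = node g' (fun i => subst (tau t') (ws i))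
              congr 1
              funext i
              by_cases hi : i = i₀
              · subst hi; simp only [hws, if_pos rfl]; exact hut'
              · simp only [hws, if_neg hi]
                symm
                apply subst_id
                intro j hj
                have hj1 : j ≠ 1 := fun h => by
                  subst h
                  exact absurd (Multiset.count_pos.2 hj) (by rw [hiZ i hi]; omega)
                simp [tau, hj1]

/-- Core lemma for the case `ar f = 0`, `f ≠ b`. -/
theorem lemCase2 {b f : S} (hb : ar b = 0) (hf : ar f = 0) (hfb : f ≠ b)
    {L₂ : Set (GTree S ar)} (hL₂ : ∀ w ∈ L₂, epsIdx w = 0) :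
    ∀ t s u : GTree S ar, s ∈ bsub b L₂ t → subst (sigf f) u = s →
      (epsIdx u).count 1 = 1 → (epsIdx u).count 0 = 0 →
      (∃ v, Good v ∧ subst (sigf f) v = t ∧ u ∈ bsub b L₂ v) ∨
      (∃ v w t', Good v ∧ subst (sigf b) v = t ∧ w ∈ bsub b L₂ v ∧ Good t' ∧
        subst (sigf f) t' ∈ L₂ ∧ u = subst (tau t') w) := by
  intro t
  induction t with
  | eps x =>
      intro s u hs hsub hc1 hc0
      rw [bsub_eps] at hs
      simp only [Set.mem_singleton_iff] at hs
      subst hs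
      cases u with
      | eps y =>
          have hy := eps_idx_one hc1
          subst hy
          simp [subst, sigf, symTree] at hsub
      | node g us => simp [subst] at hsub
  | node g ts ih =>
      intro s u hs hsub hc1 hc0
      by_cases hg : g = b
      · subst hg
        rw [bsub_node_self] at hs
        refine Or.inr ⟨eps 1, eps 1, u, good_eps_one, ?_, Set.mem_singleton _, ⟨hc1, hc0⟩, ?_, ?_⟩
        · show (symTree g : GTree S ar) = node g ts
          rw [symTree]
          exact node_congr_fin0 rfl hb _ _
        · rw [hsub]; exact hs
        · simp [subst, tau]
      · rw [bsub_node_ne hg] at hs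
        obtain ⟨ss, hss, rfl⟩ := hs
        cases u with
        | eps y =>
            have hy := eps_idx_one hc1
            subst hy
            have hsym : (symTree f : GTree S ar) = node g ss := by
              simpa [subst, sigf] using hsub
            rw [symTree] at hsym
            injection hsym with h1 h2
            subst h1
            refine Or.inl ⟨eps 1, good_eps_one, ?_, Set.mem_singleton _⟩
            show (symTree f : GTree S ar) = node f ts
            rw [symTree]
            exact node_congr_fin0 rfl hf _ _
        | node g' us =>
            have hsub' : node g' (fun i => subst (sigf f) (us i)) = node g ss := hsub
            injection hsub' with h1 h2
            subst h1
            have h2' := eq_of_heq h2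
            obtain ⟨i₀, hi₀1, hiZ, hi0⟩ := good_node_split hc1 hc0
            have hconv : ∀ i, i ≠ i₀ → subst (sigf b) (us i) = ss i := by
              intro i hi
              rw [← congrFun h2' i]
              apply subst_congr
              intro j hj
              have hj1 : j ≠ 1 := fun h => by
                subst h
                exact absurd (Multiset.count_pos.2 hj) (by rw [hiZ i hi]; omega)
              simp [sigf, hj1]
            rcases ih i₀ (ss i₀) (us i₀) (hss i₀) (congrFun h2' i₀) hi₀1 (hi0 i₀) with
              ⟨v₀, hGv₀, hv₀, hw₀⟩ | ⟨v₀, w₀, t', hGv₀, hv₀, hw₀, hGt', ht'L, hut'⟩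
            · -- left disjunct
              have hZ : ∀ i, ∃ v, i ≠ i₀ → subst (sigf f) v = ts i ∧ us i ∈ bsub b L₂ v := by
                intro i
                by_cases hi : i = i₀
                · exact ⟨eps 0, fun h => absurd hi h⟩
                · obtain ⟨v, hZ1, hZ2⟩ :=
                    lemZ hb hL₂ f (ts i) (ss i) (us i) (hss i) (congrFun h2' i) (hiZ i hi)
                  exact ⟨v, fun _ => ⟨hZ1, hZ2⟩⟩
              choose vZ hvZ using hZ
              set vs : Fin (ar g') → GTree S ar := fun i => if i = i₀ then v₀ else vZ i with hvs
              have hepsZ : ∀ i, i ≠ i₀ → epsIdx (vZ i) = epsIdx (us i) :=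
                fun i hi => (epsIdx_bsub hb hL₂ ((hvZ i hi).2)).symm
              refine Or.inl ⟨node g' vs, ?_, ?_, ?_⟩
              · apply good_node_assemble i₀
                · simp only [hvs, if_pos rfl]; exact hGv₀
                · intro i hi
                  simp only [hvs, if_neg hi]
                  rw [hepsZ i hi]
                  exact ⟨hiZ i hi, hi0 i⟩
              · show node g' (fun i => subst (sigf f) (vs i)) = node g' ts
                congr 1
                funext i
                by_cases hi : i = i₀
                · subst hi; simp only [hvs, if_pos rfl]; exact hv₀
                · simp only [hvs, if_neg hi]; exact (hvZ i hi).1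
              · rw [bsub_node_ne hg]
                refine ⟨us, fun i => ?_, rfl⟩
                by_cases hi : i = i₀
                · subst hi; simp only [hvs, if_pos rfl]; exact hw₀
                · simp only [hvs, if_neg hi]; exact (hvZ i hi).2
            · -- right disjunct
              have hZ : ∀ i, ∃ v, i ≠ i₀ → subst (sigf b) v = ts i ∧ us i ∈ bsub b L₂ v := by
                intro i
                by_cases hi : i = i₀
                · exact ⟨eps 0, fun h => absurd hi h⟩
                · obtain ⟨v, hZ1, hZ2⟩ :=
                    lemZ hb hL₂ b (ts i) (ss i) (us i) (hss i) (hconv i hi) (hiZ i hi)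
                  exact ⟨v, fun _ => ⟨hZ1, hZ2⟩⟩
              choose vZ hvZ using hZ
              set vs : Fin (ar g') → GTree S ar := fun i => if i = i₀ then v₀ else vZ i with hvs
              set ws : Fin (ar g') → GTree S ar := fun i => if i = i₀ then w₀ else us i with hws
              have hepsZ : ∀ i, i ≠ i₀ → epsIdx (vZ i) = epsIdx (us i) :=
                fun i hi => (epsIdx_bsub hb hL₂ ((hvZ i hi).2)).symm
              refine Or.inr ⟨node g' vs, node g' ws, t', ?_, ?_, ?_, hGt', ht'L, ?_⟩
              · apply good_node_assemble i₀
                · simp only [hvs, if_pos rfl]; exact hGv₀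
                · intro i hi
                  simp only [hvs, if_neg hi]
                  rw [hepsZ i hi]
                  exact ⟨hiZ i hi, hi0 i⟩
              · show node g' (fun i => subst (sigf b) (vs i)) = node g' ts
                congr 1
                funext i
                by_cases hi : i = i₀
                · subst hi; simp only [hvs, if_pos rfl]; exact hv₀
                · simp only [hvs, if_neg hi]; exact (hvZ i hi).1
              · rw [bsub_node_ne hg]
                refine ⟨ws, fun i => ?_, rfl⟩
                by_cases hi : i = i₀
                · subst hi; simp only [hvs, hws, if_pos rfl]; exact hw₀
                · simp only [hvs, hws, if_neg hi]; exact (hvZ i hi).2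
              · show node g' us = node g' (fun i => subst (tau t') (ws i))
                congr 1
                funext i
                by_cases hi : i = i₀
                · subst hi; simp only [hws, if_pos rfl]; exact hut'
                · simp only [hws, if_neg hi]
                  symm
                  apply subst_id
                  intro j hj
                  have hj1 : j ≠ 1 := fun h => by
                    subst h
                    exact absurd (Multiset.count_pos.2 hj) (by rw [hiZ i hi]; omega)
                  simp [tau, hj1]

theorem good_subst_tau {t' w : GTree S ar} (hw : Good w) (ht' : Good t') :
    Good (subst (tau t') w) := by
  have h := epsIdx_subst_tau (t' := t') hw.1
  have hw1 := hw.1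
  have hw0 := hw.2
  constructor
  · rw [h, Multiset.count_add, ht'.1]
    have := Multiset.count_erase_self 1 (epsIdx w)
    omega
  · rw [h, Multiset.count_add, ht'.2]
    have := Multiset.count_erase_of_ne (by norm_num : (0:ℕ) ≠ 1) (epsIdx w)
    omega

theorem revA {b f : S} (hb : ar b = 0) (hfb : f ≠ b) {L₂ : Set (GTree S ar)}
    (hL₂ : ∀ w ∈ L₂, epsIdx w = 0) {v t u : GTree S ar}
    (hv : subst (sigf f) v = t) (hu : u ∈ bsub b L₂ v) :
    subst (sigf f) u ∈ bsub b L₂ t := by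
  rw [← hv]
  exact bsub_subst hL₂ (sigf_mem_bsub hfb L₂) hu

theorem revB {b f : S} (hb : ar b = 0) {L₂ : Set (GTree S ar)}
    (hL₂ : ∀ w ∈ L₂, epsIdx w = 0) {v w t t' : GTree S ar}
    (hv : subst (sigf b) v = t) (hw : w ∈ bsub b L₂ v)
    (ht' : subst (sigf f) t' ∈ L₂) :
    subst (sigf f) (subst (tau t') w) ∈ bsub b L₂ t := by
  rw [subst_subst, ← hv]
  apply bsub_subst hL₂ ?_ hw
  intro j
  by_cases hj : j = 1
  · subst hj
    show subst (sigf f) (tau t' 1) ∈ bsub b L₂ (sigf b 1)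
    have h1 : tau t' 1 = t' := by simp [tau]
    have h2 : sigf b 1 = (symTree b : GTree S ar) := by simp [sigf]
    rw [h1, h2, symTree, bsub_node_self]
    exact ht'
  · show subst (sigf f) (tau t' j) ∈ bsub b L₂ (sigf b j)
    have h1 : tau t' j = eps j := by simp [tau, hj]
    have h2 : sigf b j = (eps (j-1) : GTree S ar) := by simp [sigf, hj]
    rw [h1, h2]
    show sigf f j ∈ _
    have h3 : sigf f j = (eps (j-1) : GTree S ar) := by simp [sigf, hj]
    rw [h3, bsub_eps]
    rfl

theorem sort_epsIdx_good {w : GTree S ar} (hG : Good w) :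
    ∃ rest : List ℕ, Multiset.sort (epsIdx w) (· ≤ ·) = 1 :: rest ∧ (1:ℕ) ∉ rest := by
  set l := Multiset.sort (epsIdx w) (· ≤ ·) with hl
  have h1m : (1:ℕ) ∈ l := by
    rw [hl, Multiset.mem_sort]
    exact Multiset.count_pos.1 (by have := hG.1; omega)
  obtain ⟨a, rest, hcons⟩ : ∃ a rest, l = a :: rest := by
    cases hc : l with
    | nil => rw [hc] at h1m; simp at h1m
    | cons a rest => exact ⟨a, rest, rfl⟩
  have hsorted : List.Pairwise (· ≤ ·) l := Multiset.pairwise_sort _ _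
  have ha1 : a = 1 := by
    have ham : a ∈ epsIdx w := by
      rw [← Multiset.mem_sort (r := (· ≤ ·)), ← hl, hcons]; exact List.mem_cons_self
    have ha0 : a ≠ 0 := fun h => by
      rw [h] at ham
      exact absurd (Multiset.count_pos.2 ham) (by have := hG.2; omega)
    rcases List.mem_cons.1 (hcons ▸ h1m) with h | h
    · omega
    · have : a ≤ 1 := by
        rw [hcons] at hsorted
        exact (List.pairwise_cons.1 hsorted).1 1 h
      omega
  subst ha1
  refine ⟨rest, hcons, ?_⟩
  intro hmem
  have hcount : l.count 1 = 1 := by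
    have hc : ((l : List ℕ) : Multiset ℕ).count 1 = 1 := by
      rw [hl, Multiset.sort_eq]
      exact hG.1
    rwa [Multiset.coe_count] at hc
  rw [hcons] at hcount
  simp [List.count_cons] at hcount
  exact absurd hcount (by
    have := List.count_pos_iff.2 hmem
    omega)

theorem pcomp_good {w : GTree S ar} (hG : Good w) (L' : Set (GTree S ar)) :
    pcomp w L' = {u | ∃ t' ∈ L', u = subst (tau t') w} := by
  obtain ⟨rest, hl, h1rest⟩ := sort_epsIdx_good hG
  have key : ∀ t' : GTree S ar, compo w (t' :: (Multiset.sort (epsIdx w) (· ≤ ·)).tail.map eps)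
      = subst (tau t') w := by
    intro t'
    rw [compo, hl]
    apply subst_congr
    intro j hj
    simp only [List.tail_cons]
    by_cases hj1 : j = 1
    · subst hj1
      rw [List.idxOf_cons_self]
      simp [tau]
    · have hjmem : j ∈ rest := by
        have : j ∈ (1 : ℕ) :: rest := by
          rw [← hl, Multiset.mem_sort]
          exact hj
        rcases List.mem_cons.1 this with h | h
        · exact absurd h hj1
        · exact h
      rw [List.idxOf_cons_ne _ (Ne.symm hj1)]
      have hlt : List.idxOf j rest < rest.length := List.idxOf_lt_length_iff.2 hjmem
      rw [List.getD_cons_succ]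
      rw [List.getD_eq_getElem _ _ (by simpa using hlt)]
      simp only [List.getElem_map]
      rw [List.getElem_idxOf hlt]
      simp [tau, hj1]
  ext u
  constructor
  · rintro ⟨t', ht', rfl⟩
    exact ⟨t', ht', key t'⟩
  · rintro ⟨t', ht', rfl⟩
    exact ⟨t', ht', (key t').symm⟩

theorem mem_quotL {d : GTree S ar} {L : Set (GTree S ar)} {u : GTree S ar} :
    u ∈ quotL d L ↔ ∃ t ∈ L, u ∈ quotT d t := by simp [quotL]

theorem mem_prodB {b : S} {L₁ L₂ : Set (GTree S ar)} {u : GTree S ar} :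
    u ∈ prodB L₁ b L₂ ↔ ∃ t ∈ L₁, u ∈ bsub b L₂ t := by simp [prodB]

theorem mem_pcompL {L L' : Set (GTree S ar)} {u : GTree S ar} :
    u ∈ pcompL L L' ↔ ∃ t ∈ L, u ∈ pcomp t L' := by simp [pcompL]

end GTree

open GTree in
/-- quotient of a `b`-product of languages `L₁ ·_b L₂` by a symbol `α`. -/
theorem quotient_alpha_of_bprod_lang {S : Type} {ar : S → ℕ} [DecidableEq S] (α b : S)
    (hb : ar b = 0) (R : Finset ℕ) (L₁ L₂ : Set (GTree S ar))
    (hL₁ : ∀ t ∈ L₁, epsIdx t = R.val) (hL₂ : ∀ t ∈ L₂, epsIdx t = 0) :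
    (α = b →
      quotL (symTree b) (prodB L₁ b L₂) =
        pcompL (prodB (quotL (symTree b) L₁) b L₂) (quotL (symTree b) L₂)) ∧
    (ar α = 0 → α ≠ b →
      quotL (symTree α) (prodB L₁ b L₂) =
        prodB (quotL (symTree α) L₁) b L₂ ∪
          pcompL (prodB (quotL (symTree b) L₁) b L₂) (quotL (symTree α) L₂)) ∧
    (1 ≤ ar α →
      quotL (symTree α) (prodB L₁ b L₂) = prodB (quotL (symTree α) L₁) b L₂) := by
  refine ⟨?_, ?_, ?_⟩
  · -- case α = b
    intro hab
    subst hab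
    ext u
    constructor
    · intro hu
      rw [mem_quotL] at hu
      obtain ⟨s, hsL, hus⟩ := hu
      rw [mem_prodB] at hsL
      obtain ⟨t, htL₁, hst⟩ := hsL
      rw [quotT_symTree] at hus
      obtain ⟨hGu, hsubu⟩ := hus
      obtain ⟨v, w, t', hGv, hv, hw, hGt', ht'L, hut'⟩ :=
        lemCase1 hb hL₂ t s u hst hsubu hGu.1 hGu.2
      rw [mem_pcompL]
      refine ⟨w, ?_, ?_⟩
      · rw [mem_prodB]
        exact ⟨v, mem_quotL.2 ⟨t, htL₁, (quotT_symTree α t).symm ▸ ⟨hGv, hv⟩⟩, hw⟩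
      · have hGw : Good w := by
          have he : epsIdx w = epsIdx v := epsIdx_bsub hb hL₂ hw
          exact ⟨he ▸ hGv.1, he ▸ hGv.2⟩
        rw [pcomp_good hGw]
        exact ⟨t', mem_quotL.2 ⟨subst (sigf α) t', ht'L,
          (quotT_symTree α _).symm ▸ ⟨hGt', rfl⟩⟩, hut'⟩
    · intro hu
      rw [mem_pcompL] at hu
      obtain ⟨w, hwP, hupc⟩ := hu
      rw [mem_prodB] at hwP
      obtain ⟨v, hvQ, hw⟩ := hwP
      rw [mem_quotL] at hvQ
      obtain ⟨t, htL₁, hvq⟩ := hvQ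
      rw [quotT_symTree] at hvq
      obtain ⟨hGv, hv⟩ := hvq
      have hGw : Good w := by
        have he : epsIdx w = epsIdx v := epsIdx_bsub hb hL₂ hw
        exact ⟨he ▸ hGv.1, he ▸ hGv.2⟩
      rw [pcomp_good hGw] at hupc
      obtain ⟨t', ht'Q, rfl⟩ := hupc
      rw [mem_quotL] at ht'Q
      obtain ⟨s₂, hs₂L, ht'q⟩ := ht'Q
      rw [quotT_symTree] at ht'q
      obtain ⟨hGt', hsubt'⟩ := ht'q
      rw [mem_quotL]
      refine ⟨subst (sigf α) (subst (tau t') w), ?_, ?_⟩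
      · rw [mem_prodB]
        exact ⟨t, htL₁, revB hb hL₂ hv hw (hsubt' ▸ hs₂L)⟩
      · rw [quotT_symTree]
        exact ⟨good_subst_tau hGw hGt', rfl⟩
  · -- case ar α = 0, α ≠ b
    intro hα hαb
    ext u
    constructor
    · intro hu
      rw [mem_quotL] at hu
      obtain ⟨s, hsL, hus⟩ := hu
      rw [mem_prodB] at hsL
      obtain ⟨t, htL₁, hst⟩ := hsL
      rw [quotT_symTree] at hus
      obtain ⟨hGu, hsubu⟩ := hus
      rcases lemCase2 hb hα hαb hL₂ t s u hst hsubu hGu.1 hGu.2 with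
        ⟨v, hGv, hv, huv⟩ | ⟨v, w, t', hGv, hv, hw, hGt', ht'L, hut'⟩
      · apply Set.mem_union_left
        rw [mem_prodB]
        exact ⟨v, mem_quotL.2 ⟨t, htL₁, (quotT_symTree α t).symm ▸ ⟨hGv, hv⟩⟩, huv⟩
      · apply Set.mem_union_right
        rw [mem_pcompL]
        refine ⟨w, ?_, ?_⟩
        · rw [mem_prodB]
          exact ⟨v, mem_quotL.2 ⟨t, htL₁, (quotT_symTree b t).symm ▸ ⟨hGv, hv⟩⟩, hw⟩
        · have hGw : Good w := by
            have he : epsIdx w = epsIdx v := epsIdx_bsub hb hL₂ hw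
            exact ⟨he ▸ hGv.1, he ▸ hGv.2⟩
          rw [pcomp_good hGw]
          exact ⟨t', mem_quotL.2 ⟨subst (sigf α) t', ht'L,
            (quotT_symTree α _).symm ▸ ⟨hGt', rfl⟩⟩, hut'⟩
    · intro hu
      rcases hu with hu | hu
      · rw [mem_prodB] at hu
        obtain ⟨v, hvQ, huv⟩ := hu
        rw [mem_quotL] at hvQ
        obtain ⟨t, htL₁, hvq⟩ := hvQ
        rw [quotT_symTree] at hvq
        obtain ⟨hGv, hv⟩ := hvq
        rw [mem_quotL]
        refine ⟨subst (sigf α) u, ?_, ?_⟩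
        · rw [mem_prodB]
          exact ⟨t, htL₁, revA hb hαb hL₂ hv huv⟩
        · rw [quotT_symTree]
          have he : epsIdx u = epsIdx v := epsIdx_bsub hb hL₂ huv
          exact ⟨⟨he ▸ hGv.1, he ▸ hGv.2⟩, rfl⟩
      · rw [mem_pcompL] at hu
        obtain ⟨w, hwP, hupc⟩ := hu
        rw [mem_prodB] at hwP
        obtain ⟨v, hvQ, hw⟩ := hwP
        rw [mem_quotL] at hvQ
        obtain ⟨t, htL₁, hvq⟩ := hvQ
        rw [quotT_symTree] at hvq
        obtain ⟨hGv, hv⟩ := hvq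
        have hGw : Good w := by
          have he : epsIdx w = epsIdx v := epsIdx_bsub hb hL₂ hw
          exact ⟨he ▸ hGv.1, he ▸ hGv.2⟩
        rw [pcomp_good hGw] at hupc
        obtain ⟨t', ht'Q, rfl⟩ := hupc
        rw [mem_quotL] at ht'Q
        obtain ⟨s₂, hs₂L, ht'q⟩ := ht'Q
        rw [quotT_symTree] at ht'q
        obtain ⟨hGt', hsubt'⟩ := ht'q
        rw [mem_quotL]
        refine ⟨subst (sigf α) (subst (tau t') w), ?_, ?_⟩
        · rw [mem_prodB]
          exact ⟨t, htL₁, revB hb hL₂ hv hw (hsubt' ▸ hs₂L)⟩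
        · rw [quotT_symTree]
          exact ⟨good_subst_tau hGw hGt', rfl⟩
  · -- case 1 ≤ ar α
    intro hα
    have hαb : α ≠ b := fun h => by rw [h, hb] at hα; omega
    ext u
    constructor
    · intro hu
      rw [mem_quotL] at hu
      obtain ⟨s, hsL, hus⟩ := hu
      rw [mem_prodB] at hsL
      obtain ⟨t, htL₁, hst⟩ := hsL
      rw [quotT_symTree] at hus
      obtain ⟨hGu, hsubu⟩ := hus
      obtain ⟨v, hv, huv⟩ := lemCase3 hb hα hL₂ t s u hst hsubu
      rw [mem_prodB]
      have he : epsIdx u = epsIdx v := epsIdx_bsub hb hL₂ huv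
      exact ⟨v, mem_quotL.2 ⟨t, htL₁,
        (quotT_symTree α t).symm ▸ ⟨⟨he ▸ hGu.1, he ▸ hGu.2⟩, hv⟩⟩, huv⟩
    · intro hu
      rw [mem_prodB] at hu
      obtain ⟨v, hvQ, huv⟩ := hu
      rw [mem_quotL] at hvQ
      obtain ⟨t, htL₁, hvq⟩ := hvQ
      rw [quotT_symTree] at hvq
      obtain ⟨hGv, hv⟩ := hvq
      rw [mem_quotL]
      refine ⟨subst (sigf α) u, ?_, ?_⟩
      · rw [mem_prodB]
        exact ⟨t, htL₁, revA hb hαb hL₂ hv huv⟩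
      · rw [quotT_symTree]
        have he : epsIdx u = epsIdx v := epsIdx_bsub hb hL₂ huv
        exact ⟨⟨he ▸ hGv.1, he ▸ hGv.2⟩, rfl⟩
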